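/- Let q ∈ ℝ with q ∉ {0,1,-1}, set β = q + q⁻¹, let a, b, c ∈ ℝ, and define θᵢ = a + b qⁱ + c q⁻ⁱ for integers i ≥ 0. Fix i ≥ 2 and assume θ₀ ≠ θ₂, θ_{i-1} ≠ θᵢ, and θᵢ ≠ θ_{i+1}. Define αⱼ = (θ₁-θ₂)(θ₀+θ₁-θ_{j-1}-θⱼ) / ((θ₀-θ₂)(θ_{j-1}-θⱼ)) for j ∈ {i, i+1}. Then αᵢ·α_{i+1} = (β+2)(θ₁-θ₂)²(θ₀-θᵢ)(θ₁-θᵢ) / ((θ₀-θ₂)²(θ_{i-1}-θᵢ)(θᵢ-θ_{i+1})). -/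

import Mathlib

theorem stmt_18 (q : ℝ) (hq0 : q ≠ 0) (hq1 : q ≠ 1) (hqm1 : q ≠ -1)
    (β : ℝ) (hβ : β = q + q⁻¹) (a b c : ℝ) (θ : ℕ → ℝ)
    (hθ : ∀ i, θ i = a + b * q ^ i + c * q⁻¹ ^ i)
    (i : ℕ) (hi : 2 ≤ i)
    (h02 : θ 0 ≠ θ 2) (hii : θ (i - 1) ≠ θ i) (hii1 : θ i ≠ θ (i + 1))
    (α : ℕ → ℝ)
    (hα : ∀ j, j = i ∨ j = i + 1 →
      α j = (θ 1 - θ 2) * (θ 0 + θ 1 - θ (j - 1) - θ j) /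
            ((θ 0 - θ 2) * (θ (j - 1) - θ j))) :
    α i * α (i + 1) =
      (β + 2) * (θ 1 - θ 2) ^ 2 * (θ 0 - θ i) * (θ 1 - θ i) /
        ((θ 0 - θ 2) ^ 2 * (θ (i - 1) - θ i) * (θ i - θ (i + 1))) := by
  obtain ⟨n, rfl⟩ : ∃ n, i = n + 2 := ⟨i - 2, by omega⟩
  have e1 : n + 2 - 1 = n + 1 := by omega
  have e2 : n + 2 + 1 - 1 = n + 2 := by omega
  rw [hα _ (Or.inl rfl), hα _ (Or.inr rfl), e1, e2] at *
  have h02' : θ 0 - θ 2 ≠ 0 := sub_ne_zero.mpr h02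
  have hii' : θ (n + 1) - θ (n + 2) ≠ 0 := sub_ne_zero.mpr hii
  have hii1' : θ (n + 2) - θ (n + 2 + 1) ≠ 0 := sub_ne_zero.mpr hii1
  rw [div_mul_div_comm, div_eq_div_iff (by positivity)
    (by exact mul_ne_zero (mul_ne_zero (pow_ne_zero _ h02') hii') hii1')]
  simp only [hθ, hβ]
  have hqn : q ^ n ≠ 0 := pow_ne_zero _ hq0
  simp only [pow_succ, inv_pow]
  field_simp
  ring
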